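/- For φ_1(z) = π^{-1/2}·z·e^{-|z|²/2} one has M(φ_1) = 1, P(φ_1) = 1, 8π·H(φ_1) = 1/2, hence G_μ(φ_1) = 1/2 + μ for every μ > 0. In particular, G_μ(φ_1) < G_μ(φ_0) = 1 if and only if μ < 1/2. -/

import Mathlib

open MeasureTheory

noncomputable def Mfun (u : ℂ → ℂ) : ℝ := ∫ z : ℂ, ‖u z‖ ^ 2
noncomputable def Pfun (u : ℂ → ℂ) : ℝ := ∫ z : ℂ, (‖z‖ ^ 2 - 1) * ‖u z‖ ^ 2
noncomputable def Hfun (u : ℂ → ℂ) : ℝ := (1 / 4) * ∫ z : ℂ, ‖u z‖ ^ 4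
noncomputable def Gfun (μ : ℝ) (u : ℂ → ℂ) : ℝ := 8 * Real.pi * Hfun u + μ * Pfun u

/-- The Gaussian `φ₀(z) = π^{-1/2} e^{-|z|²/2}`. -/
noncomputable def phi0 : ℂ → ℂ :=
  fun z => (((Real.sqrt Real.pi)⁻¹ * Real.exp (-‖z‖ ^ 2 / 2) : ℝ) : ℂ)

/-- The first special Hermite function `φ₁(z) = π^{-1/2} z e^{-|z|²/2}`. -/
noncomputable def phi1 : ℂ → ℂ :=
  fun z => (((Real.sqrt Real.pi)⁻¹ : ℝ) : ℂ) * z * ((Real.exp (-‖z‖ ^ 2 / 2) : ℝ) : ℂ)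

open Real in
lemma norm_phi1 (z : ℂ) :
    ‖phi1 z‖ = (Real.sqrt π)⁻¹ * ‖z‖ * Real.exp (-‖z‖ ^ 2 / 2) := by
  simp only [phi1, norm_mul, Complex.norm_real, Real.norm_eq_abs, Real.abs_exp,
    abs_inv, abs_of_nonneg (Real.sqrt_nonneg _)]

open Real in
lemma norm_phi0 (z : ℂ) :
    ‖phi0 z‖ = (Real.sqrt π)⁻¹ * Real.exp (-‖z‖ ^ 2 / 2) := by
  simp only [phi0, Complex.norm_real, Real.norm_eq_abs, abs_mul, abs_inv,
    abs_of_nonneg (Real.sqrt_nonneg _), Real.abs_exp]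

open Real in
lemma sqrt_pi_inv_sq : (Real.sqrt π)⁻¹ * (Real.sqrt π)⁻¹ = π⁻¹ := by
  rw [← mul_inv, Real.mul_self_sqrt Real.pi_pos.le]

open Real in
lemma exp_half_sq (r : ℝ) : Real.exp (-r / 2) * Real.exp (-r / 2) = Real.exp (-1 * r) := by
  rw [← Real.exp_add]; congr 1; ring

open Real in
lemma norm_phi1_sq (z : ℂ) :
    ‖phi1 z‖ ^ 2 = π⁻¹ * (‖z‖ ^ 2 * Real.exp (-1 * ‖z‖ ^ 2)) := by
  rw [norm_phi1]
  calc ((Real.sqrt π)⁻¹ * ‖z‖ * Real.exp (-‖z‖ ^ 2 / 2)) ^ 2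
      = ((Real.sqrt π)⁻¹ * (Real.sqrt π)⁻¹) *
        (‖z‖ ^ 2 * (Real.exp (-‖z‖ ^ 2 / 2) * Real.exp (-‖z‖ ^ 2 / 2))) := by ring
    _ = _ := by rw [sqrt_pi_inv_sq, exp_half_sq]

open Real in
lemma norm_phi0_sq (z : ℂ) :
    ‖phi0 z‖ ^ 2 = π⁻¹ * Real.exp (-1 * ‖z‖ ^ 2) := by
  rw [norm_phi0]
  calc ((Real.sqrt π)⁻¹ * Real.exp (-‖z‖ ^ 2 / 2)) ^ 2
      = ((Real.sqrt π)⁻¹ * (Real.sqrt π)⁻¹) *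
        (Real.exp (-‖z‖ ^ 2 / 2) * Real.exp (-‖z‖ ^ 2 / 2)) := by ring
    _ = _ := by rw [sqrt_pi_inv_sq, exp_half_sq]

open Real in
lemma exp_neg_one_sq (r : ℝ) :
    Real.exp (-1 * r) * Real.exp (-1 * r) = Real.exp (-2 * r) := by
  rw [← Real.exp_add]; congr 1; ring

open Real in
lemma norm_phi1_four (z : ℂ) :
    ‖phi1 z‖ ^ 4 = (π ^ 2)⁻¹ * (‖z‖ ^ 4 * Real.exp (-2 * ‖z‖ ^ 2)) := by
  have : ‖phi1 z‖ ^ 4 = (‖phi1 z‖ ^ 2) ^ 2 := by ring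
  rw [this, norm_phi1_sq]
  calc (π⁻¹ * (‖z‖ ^ 2 * Real.exp (-1 * ‖z‖ ^ 2))) ^ 2
      = (π⁻¹ * π⁻¹) * (‖z‖ ^ 4 *
        (Real.exp (-1 * ‖z‖ ^ 2) * Real.exp (-1 * ‖z‖ ^ 2))) := by ring
    _ = _ := by rw [exp_neg_one_sq, ← mul_inv, ← sq]

open Real in
lemma norm_phi0_four (z : ℂ) :
    ‖phi0 z‖ ^ 4 = (π ^ 2)⁻¹ * Real.exp (-2 * ‖z‖ ^ 2) := by
  have : ‖phi0 z‖ ^ 4 = (‖phi0 z‖ ^ 2) ^ 2 := by ring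
  rw [this, norm_phi0_sq]
  calc (π⁻¹ * Real.exp (-1 * ‖z‖ ^ 2)) ^ 2
      = (π⁻¹ * π⁻¹) * (Real.exp (-1 * ‖z‖ ^ 2) * Real.exp (-1 * ‖z‖ ^ 2)) := by ring
    _ = _ := by rw [exp_neg_one_sq, ← mul_inv, ← sq]

open Real

lemma pow_le_factorial_mul_exp {x : ℝ} (hx : 0 ≤ x) (k : ℕ) :
    x ^ k ≤ k.factorial * Real.exp x := by
  have h := Real.sum_le_exp_of_nonneg hx (k + 1)
  have h2 : x ^ k / k.factorial ≤ ∑ i ∈ Finset.range (k + 1), x ^ i / i.factorial :=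
    Finset.single_le_sum (f := fun i => x ^ i / i.factorial)
      (fun i _ => by positivity) (Finset.self_mem_range_succ k)
  have hk : (0:ℝ) < k.factorial := by positivity
  rw [div_le_iff₀ hk] at h2
  nlinarith [h2, Real.exp_nonneg x]

lemma integrable_gauss {b : ℝ} (hb : 0 < b) :
    Integrable fun z : ℂ => Real.exp (-b * ‖z‖ ^ 2) := by
  have hc : Integrable fun v : ℂ =>
      Complex.exp (-(b:ℂ) * ‖v‖ ^ 2 + 0 * (inner ℝ (0:ℂ) v : ℝ)) :=
    GaussianFourier.integrable_cexp_neg_mul_sq_norm_add (by simpa using hb) 0 0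
  have := hc.norm
  simpa [Complex.norm_exp, ← Complex.ofReal_pow] using this

lemma integrable_even (m : ℕ) {b : ℝ} (hb : 0 < b) :
    Integrable fun z : ℂ => ‖z‖ ^ (2 * m) * Real.exp (-b * ‖z‖ ^ 2) := by
  have hbase := (integrable_gauss (half_pos hb)).const_mul ((2 / b) ^ m * m.factorial)
  refine hbase.mono' ?_ (Filter.Eventually.of_forall fun z => ?_)
  · exact (Continuous.mul (by continuity) (by continuity)).aestronglyMeasurable
  · set t : ℝ := ‖z‖ ^ 2 with htdef
    have ht : (0:ℝ) ≤ t := by positivity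
    have h1 : (b / 2 * t) ^ m ≤ m.factorial * Real.exp (b / 2 * t) :=
      pow_le_factorial_mul_exp (by positivity) m
    have key : (b / 2) ^ m * t ^ m ≤ m.factorial * Real.exp (b / 2 * t) := by
      rw [← mul_pow]; exact h1
    have h2 : t ^ m ≤ (2 / b) ^ m * m.factorial * Real.exp (b / 2 * t) := by
      calc t ^ m = ((b / 2) ^ m)⁻¹ * ((b / 2) ^ m * t ^ m) := by
              field_simp
        _ ≤ ((b / 2) ^ m)⁻¹ * (m.factorial * Real.exp (b / 2 * t)) :=
              mul_le_mul_of_nonneg_left key (by positivity)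
        _ = (2 / b) ^ m * m.factorial * Real.exp (b / 2 * t) := by
              rw [← inv_pow, inv_div]; ring
    have hnorm : ‖z‖ ^ (2 * m) = t ^ m := by rw [htdef, ← pow_mul, mul_comm]
    rw [Real.norm_eq_abs, abs_of_nonneg (by positivity), hnorm]
    calc t ^ m * Real.exp (-b * t)
        ≤ (2 / b) ^ m * m.factorial * Real.exp (b / 2 * t) * Real.exp (-b * t) :=
          mul_le_mul_of_nonneg_right h2 (Real.exp_nonneg _)
      _ = (2 / b) ^ m * ↑m.factorial * Real.exp (-(b / 2) * t) := by
          rw [mul_assoc, ← Real.exp_add]; ring_nf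

example : Real.Gamma 2 = 1 := Real.Gamma_two
example : Real.Gamma 3 = 2 := by
  have := Real.Gamma_nat_eq_factorial 2
  norm_num at this; convert this using 2 <;> norm_num

lemma int0 {b : ℝ} (hb : 0 < b) : ∫ z : ℂ, Real.exp (-b * ‖z‖ ^ 2) = π / b := by
  have h := Complex.integral_exp_neg_mul_rpow (p := 2) one_le_two hb
  rw [show ∫ z : ℂ, Real.exp (-b * ‖z‖ ^ 2) = ∫ z : ℂ, Real.exp (-b * ‖z‖ ^ (2:ℝ)) by
    congr 1; funext z; rw [Real.rpow_two]] -- check name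
  rw [h]
  rw [show (-2 / 2 : ℝ) = -1 by norm_num, Real.rpow_neg_one,
    show (2 / 2 + 1 : ℝ) = 2 by norm_num, Real.Gamma_two]
  ring

lemma int2 {b : ℝ} (hb : 0 < b) :
    ∫ z : ℂ, ‖z‖ ^ 2 * Real.exp (-b * ‖z‖ ^ 2) = π / b ^ 2 := by
  have h := Complex.integral_rpow_mul_exp_neg_mul_rpow (p := 2) (q := 2) one_le_two
    (by norm_num) hb
  rw [show ∫ z : ℂ, ‖z‖ ^ 2 * Real.exp (-b * ‖z‖ ^ 2)
      = ∫ z : ℂ, ‖z‖ ^ (2:ℝ) * Real.exp (-b * ‖z‖ ^ (2:ℝ)) by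
    congr 1; funext z; rw [Real.rpow_two]]
  rw [h, show (-(2 + 2) / 2 : ℝ) = -2 by norm_num, Real.rpow_neg hb.le, Real.rpow_two,
    show ((2:ℝ) + 2) / 2 = 2 by norm_num, Real.Gamma_two]
  field_simp

lemma int4 {b : ℝ} (hb : 0 < b) :
    ∫ z : ℂ, ‖z‖ ^ 4 * Real.exp (-b * ‖z‖ ^ 2) = 2 * π / b ^ 3 := by
  have h := Complex.integral_rpow_mul_exp_neg_mul_rpow (p := 2) (q := 4) one_le_two
    (by norm_num) hb
  have hG : Real.Gamma 3 = 2 := by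
    have := Real.Gamma_nat_eq_factorial 2
    norm_num at this; convert this using 2 <;> norm_num
  rw [show ∫ z : ℂ, ‖z‖ ^ 4 * Real.exp (-b * ‖z‖ ^ 2)
      = ∫ z : ℂ, ‖z‖ ^ (4:ℝ) * Real.exp (-b * ‖z‖ ^ (2:ℝ)) by
    congr 1; funext z
    rw [Real.rpow_two, show (4:ℝ) = ((4:ℕ):ℝ) by norm_num, Real.rpow_natCast]]
  rw [h, show (-(4 + 2) / 2 : ℝ) = -3 by norm_num, Real.rpow_neg hb.le,
    show ((4:ℝ) + 2) / 2 = 3 by norm_num, hG,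
    show (3:ℝ) = ((3:ℕ):ℝ) by norm_num, Real.rpow_natCast]
  field_simp

lemma hM1 : Mfun phi1 = 1 := by
  unfold Mfun
  simp_rw [norm_phi1_sq]
  rw [integral_const_mul, int2 one_pos]
  field_simp

lemma hP1 : Pfun phi1 = 1 := by
  unfold Pfun
  have hpt : ∀ z : ℂ, (‖z‖ ^ 2 - 1) * ‖phi1 z‖ ^ 2
      = π⁻¹ * (‖z‖ ^ 4 * Real.exp (-1 * ‖z‖ ^ 2))
        - π⁻¹ * (‖z‖ ^ 2 * Real.exp (-1 * ‖z‖ ^ 2)) := by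
    intro z; rw [norm_phi1_sq]; ring
  simp_rw [hpt]
  have i4 : Integrable (fun z : ℂ => π⁻¹ * (‖z‖ ^ 4 * Real.exp (-1 * ‖z‖ ^ 2))) :=
    (integrable_even 2 one_pos).const_mul π⁻¹
  have i2 : Integrable (fun z : ℂ => π⁻¹ * (‖z‖ ^ 2 * Real.exp (-1 * ‖z‖ ^ 2))) :=
    (integrable_even 1 one_pos).const_mul π⁻¹
  rw [integral_sub i4 i2, integral_const_mul, integral_const_mul, int4 one_pos, int2 one_pos]
  field_simp
  norm_num

lemma hH1 : 8 * Real.pi * Hfun phi1 = 1 / 2 := by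
  unfold Hfun
  simp_rw [norm_phi1_four]
  rw [integral_const_mul, int4 two_pos]
  have := Real.pi_ne_zero
  field_simp
  ring

lemma hP0 : Pfun phi0 = 0 := by
  unfold Pfun
  have hpt : ∀ z : ℂ, (‖z‖ ^ 2 - 1) * ‖phi0 z‖ ^ 2
      = π⁻¹ * (‖z‖ ^ 2 * Real.exp (-1 * ‖z‖ ^ 2)) - π⁻¹ * Real.exp (-1 * ‖z‖ ^ 2) := by
    intro z; rw [norm_phi0_sq]; ring
  simp_rw [hpt]
  have i2 : Integrable (fun z : ℂ => π⁻¹ * (‖z‖ ^ 2 * Real.exp (-1 * ‖z‖ ^ 2))) :=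
    (integrable_even 1 one_pos).const_mul π⁻¹
  have i0 : Integrable (fun z : ℂ => π⁻¹ * Real.exp (-1 * ‖z‖ ^ 2)) :=
    (integrable_gauss one_pos).const_mul π⁻¹
  rw [integral_sub i2 i0, integral_const_mul, integral_const_mul, int2 one_pos, int0 one_pos]
  field_simp
  norm_num

lemma hH0 : 8 * Real.pi * Hfun phi0 = 1 := by
  unfold Hfun
  simp_rw [norm_phi0_four]
  rw [integral_const_mul, int0 two_pos]
  have := Real.pi_ne_zero
  field_simp
  ring

/-- `M(φ₁) = 1`, `P(φ₁) = 1`, `8π H(φ₁) = 1/2`, hence `G_μ(φ₁) = 1/2 + μ` for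
every `μ > 0`; in particular `G_μ(φ₁) < G_μ(φ₀) = 1` iff `μ < 1/2`. -/
theorem stmt10 :
    Mfun phi1 = 1 ∧ Pfun phi1 = 1 ∧ 8 * Real.pi * Hfun phi1 = 1 / 2 ∧
    ∀ μ : ℝ, 0 < μ →
      Gfun μ phi1 = 1 / 2 + μ ∧ Gfun μ phi0 = 1 ∧
      (Gfun μ phi1 < Gfun μ phi0 ↔ μ < 1 / 2) := by
  refine ⟨hM1, hP1, hH1, fun μ hμ => ?_⟩
  have hg1 : Gfun μ phi1 = 1 / 2 + μ := by
    unfold Gfun; rw [hH1, hP1]; ring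
  have hg0 : Gfun μ phi0 = 1 := by
    unfold Gfun; rw [hH0, hP0]; ring
  exact ⟨hg1, hg0, by rw [hg1, hg0]; constructor <;> intro h <;> linarith⟩
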